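/- For every positive integer n and every n×n complex matrix A, the mean squared deviation of the Glynn estimator from the permanent over uniformly random sign vectors is at most ‖A‖^{2n}: 2^{−n} Σ_{x ∈ {−1,1}^n} |Gly_x(A) − Per(A)|² ≤ ‖A‖^{2n}. -/

import Mathlib

open scoped Matrix.Norms.L2Operator

/-- The Glynn estimator of an `n × n` complex matrix `A` at a sign vector `x`:
`Gly_x(A) = x_1 ⋯ x_n ∏_i (a_{i,1} x_1 + ⋯ + a_{i,n} x_n)`. -/
noncomputable def glynn {n : ℕ} (A : Matrix (Fin n) (Fin n) ℂ) (x : Fin n → ℂ) : ℂ :=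
  (∏ i, x i) * ∏ i, ∑ j, A i j * x j

/-- The permanent of an `n × n` complex matrix. -/
noncomputable def permanent {n : ℕ} (A : Matrix (Fin n) (Fin n) ℂ) : ℂ :=
  ∑ σ : Equiv.Perm (Fin n), ∏ i, A i (σ i)

namespace GlynnAux

open Finset
open scoped Matrix

variable {n : ℕ}

noncomputable abbrev S (n : ℕ) : Finset (Fin n → ℂ) :=
  Fintype.piFinset (fun _ : Fin n => ({-1, 1} : Finset ℂ))

lemma mem_S {x : Fin n → ℂ} (hx : x ∈ S n) (i : Fin n) : x i = -1 ∨ x i = 1 := by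
  have := Fintype.mem_piFinset.mp hx i
  simpa using this

lemma sq_one {x : Fin n → ℂ} (hx : x ∈ S n) (i : Fin n) : x i * x i = 1 := by
  rcases mem_S hx i with h | h <;> rw [h] <;> ring

lemma abs_one {x : Fin n → ℂ} (hx : x ∈ S n) (i : Fin n) : ‖x i‖ = 1 := by
  rcases mem_S hx i with h | h <;> rw [h] <;> simp

lemma card_S : (S n).card = 2 ^ n := by
  rw [Fintype.card_piFinset]
  have : ({-1, 1} : Finset ℂ).card = 2 := by
    rw [Finset.card_insert_of_notMem (by norm_num), Finset.card_singleton]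
  simp [this]

lemma T_bij {f : Fin n → Fin n} (hf : Function.Bijective f) :
    ∑ x ∈ S n, (∏ i, x i) * ∏ i, x (f i) = (2 : ℂ) ^ n := by
  have h : ∀ x ∈ S n, (∏ i, x i) * ∏ i, x (f i) = 1 := by
    intro x hx
    rw [hf.prod_comp, ← Finset.prod_mul_distrib]
    exact Finset.prod_eq_one fun i _ => sq_one hx i
  rw [Finset.sum_congr rfl h, Finset.sum_const, card_S]
  simp

lemma T_nonbij {f : Fin n → Fin n} (hf : ¬ Function.Bijective f) :
    ∑ x ∈ S n, (∏ i, x i) * ∏ i, x (f i) = 0 := by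
  have hs : ¬ Function.Surjective f := fun h =>
    hf ((Finite.surjective_iff_bijective).mp h)
  simp only [Function.Surjective, not_forall, not_exists] at hs
  obtain ⟨j₀, hj₀⟩ := hs
  classical
  refine Finset.sum_involution (fun x _ => Function.update x j₀ (-(x j₀))) ?_ ?_ ?_ ?_
  · intro x hx
    have h1 : ∏ i, Function.update x j₀ (-(x j₀)) i = -∏ i, x i := by
      rw [Finset.prod_update_of_mem (Finset.mem_univ j₀)]
      rw [← Finset.prod_erase_mul _ _ (Finset.mem_univ j₀)]
      rw [Finset.erase_eq]
      ring
    have h2 : ∏ i, Function.update x j₀ (-(x j₀)) (f i) = ∏ i, x (f i) := by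
      refine Finset.prod_congr rfl fun i _ => ?_
      exact Function.update_of_ne (hj₀ i) _ _
    rw [h1, h2]; ring
  · intro x hx h
    intro heq
    have hx0 : x j₀ ≠ 0 := by
      rcases mem_S hx j₀ with h' | h' <;> rw [h'] <;> norm_num
    have := congrFun heq j₀
    simp only [Function.update_self] at this
    exact hx0 (by linear_combination (-1/2 : ℂ) * this)
  · intro x hx
    show Function.update x j₀ (-(x j₀)) ∈ S n
    rw [Fintype.mem_piFinset] at hx ⊢
    intro i
    by_cases hi : i = j₀
    · subst hi
      rw [Function.update_self]
      rcases mem_S (by exact Fintype.mem_piFinset.mpr hx) i with h | h <;> rw [h] <;> simp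
    · rw [Function.update_of_ne hi]; exact hx i
  · intro x hx
    show Function.update _ j₀ (-(Function.update x j₀ (-(x j₀)) j₀)) = x
    funext i
    by_cases hi : i = j₀
    · subst hi; simp
    · simp [Function.update_of_ne hi]

lemma sum_glynn (A : Matrix (Fin n) (Fin n) ℂ) :
    ∑ x ∈ S n, glynn A x = (2 : ℂ) ^ n * permanent A := by
  classical
  simp only [glynn]
  have expand : ∀ x : Fin n → ℂ, ∏ i, ∑ j, A i j * x j
      = ∑ f ∈ Fintype.piFinset (fun _ : Fin n => (Finset.univ : Finset (Fin n))),
          ∏ i, A i (f i) * x (f i) :=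
    fun x => Finset.prod_univ_sum _ _
  calc ∑ x ∈ S n, (∏ i, x i) * ∏ i, ∑ j, A i j * x j
      = ∑ x ∈ S n, ∑ f ∈ Fintype.piFinset (fun _ : Fin n => (Finset.univ : Finset (Fin n))),
          (∏ i, A i (f i)) * ((∏ i, x i) * ∏ i, x (f i)) := by
        refine Finset.sum_congr rfl fun x _ => ?_
        rw [expand, Finset.mul_sum]
        refine Finset.sum_congr rfl fun f _ => ?_
        rw [Finset.prod_mul_distrib]; ring
    _ = ∑ f ∈ Fintype.piFinset (fun _ : Fin n => (Finset.univ : Finset (Fin n))),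
          (∏ i, A i (f i)) * ∑ x ∈ S n, (∏ i, x i) * ∏ i, x (f i) := by
        rw [Finset.sum_comm]
        exact Finset.sum_congr rfl fun f _ => (Finset.mul_sum _ _ _).symm
    _ = ∑ f ∈ Finset.univ.filter (Function.Bijective (α := Fin n)),
          (∏ i, A i (f i)) * (2 : ℂ) ^ n := by
        rw [Fintype.piFinset_univ, ← Finset.sum_filter_add_sum_filter_not Finset.univ
          (Function.Bijective (α := Fin n))]
        have h0 : ∑ f ∈ Finset.univ.filter (fun f => ¬ Function.Bijective f),
            (∏ i, A i (f i)) * ∑ x ∈ S n, (∏ i, x i) * ∏ i, x (f i) = 0 := by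
          refine Finset.sum_eq_zero fun f hf => ?_
          rw [T_nonbij (Finset.mem_filter.mp hf).2, mul_zero]
        rw [h0, add_zero]
        refine Finset.sum_congr rfl fun f hf => ?_
        rw [T_bij (Finset.mem_filter.mp hf).2]
    _ = (2 : ℂ) ^ n * permanent A := by
        rw [← Finset.sum_mul, mul_comm, permanent]
        congr 1
        refine (Finset.sum_bij (fun (σ : Equiv.Perm (Fin n)) _ => (σ : Fin n → Fin n))
          ?_ ?_ ?_ ?_).symm
        · intro σ _; exact Finset.mem_filter.mpr ⟨Finset.mem_univ _, σ.bijective⟩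
        · intro σ _ τ _ h; exact Equiv.coe_fn_injective h
        · intro f hf
          exact ⟨Equiv.ofBijective f (Finset.mem_filter.mp hf).2, Finset.mem_univ _, rfl⟩
        · intro σ _; rfl

lemma pointwise_bound (hn : 0 < n) (A : Matrix (Fin n) (Fin n) ℂ) (x : Fin n → ℂ)
    (hx : ∀ i, ‖x i‖ = 1) :
    ‖glynn A x‖ ^ 2 ≤ ‖A‖ ^ (2 * n) := by
  classical
  rw [glynn]
  set x' : EuclideanSpace ℂ (Fin n) := (EuclideanSpace.equiv (Fin n) ℂ).symm x with hx'
  set y : EuclideanSpace ℂ (Fin n) :=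
    (EuclideanSpace.equiv (Fin n) ℂ).symm (A *ᵥ x) with hy
  have hnormx : ‖x'‖ = Real.sqrt n := by
    rw [EuclideanSpace.norm_eq]
    congr 1
    have h4 : ∀ i, ‖x' i‖ ^ 2 = 1 := by
      intro i
      have : ‖x' i‖ = 1 := hx i
      rw [this]; norm_num
    simp [h4]
  have hAx : ‖y‖ ≤ ‖A‖ * Real.sqrt n := by
    have := A.l2_opNorm_mulVec x'
    rwa [hnormx] at this
  set z : Fin n → ℝ := fun i => ‖(A *ᵥ x) i‖ ^ 2 with hz
  have hznn : ∀ i ∈ Finset.univ, (0:ℝ) ≤ z i := fun i _ => sq_nonneg _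
  have hsumz : ∑ i, z i = ‖y‖ ^ 2 := by
    rw [EuclideanSpace.norm_eq, Real.sq_sqrt (by positivity)]
    refine Finset.sum_congr rfl fun i _ => ?_
    simp [hz]
    rfl
  have hsum_le : ∑ i, z i ≤ ‖A‖ ^ 2 * n := by
    rw [hsumz]
    calc ‖y‖ ^ 2 ≤ (‖A‖ * Real.sqrt n) ^ 2 := by
          exact pow_le_pow_left₀ (norm_nonneg _) hAx 2
      _ = ‖A‖ ^ 2 * n := by
          rw [mul_pow, Real.sq_sqrt (by positivity)]
  have hN : (0:ℝ) < n := by exact_mod_cast hn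
  have amgm : (∏ i, z i) ^ ((n:ℝ))⁻¹ ≤ (∑ i, z i) / n := by
    have := Real.geom_mean_le_arith_mean (Finset.univ : Finset (Fin n))
      (fun _ => (1:ℝ)) z (fun _ _ => zero_le_one) (by simpa using hN) hznn
    simpa using this
  have hprod_le : ∏ i, z i ≤ ((∑ i, z i) / n) ^ n := by
    have h1 : ((∏ i, z i) ^ ((n:ℝ))⁻¹) ^ (n:ℕ) ≤ ((∑ i, z i) / n) ^ (n:ℕ) :=
      pow_le_pow_left₀ (Real.rpow_nonneg (Finset.prod_nonneg hznn) _) amgm n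
    rwa [← Real.rpow_natCast ((∏ i, z i) ^ ((n:ℝ))⁻¹) n, ← Real.rpow_mul
      (Finset.prod_nonneg hznn), inv_mul_cancel₀ (ne_of_gt hN), Real.rpow_one] at h1
  have hfinal : ((∑ i, z i) / n) ^ n ≤ ‖A‖ ^ (2 * n) := by
    have h2 : (∑ i, z i) / n ≤ ‖A‖ ^ 2 := by
      rw [div_le_iff₀ hN]
      linarith [hsum_le]
    calc ((∑ i, z i) / n) ^ n ≤ (‖A‖ ^ 2) ^ n :=
          pow_le_pow_left₀ (by positivity) h2 n
      _ = ‖A‖ ^ (2 * n) := by rw [← pow_mul]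
  have habs : ‖(∏ i, x i) * ∏ i, ∑ j, A i j * x j‖ ^ 2 = ∏ i, z i := by
    rw [norm_mul, norm_prod, norm_prod]
    have h3 : ∏ i, ‖x i‖ = 1 := Finset.prod_eq_one fun i _ => hx i
    rw [h3, one_mul, ← Finset.prod_pow]
    refine Finset.prod_congr rfl fun i _ => ?_
    congr 1
  rw [habs]
  exact le_trans hprod_le hfinal

lemma variance_identity (A : Matrix (Fin n) (Fin n) ℂ) :
    ∑ x ∈ S n, ‖glynn A x - permanent A‖ ^ 2
      = (∑ x ∈ S n, ‖glynn A x‖ ^ 2)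
        - 2 ^ n * ‖permanent A‖ ^ 2 := by
  set g : (Fin n → ℂ) → ℂ := glynn A with hg
  set p : ℂ := permanent A with hp
  have hsum : ∑ x ∈ S n, g x = (2:ℂ) ^ n * p := sum_glynn A
  have hconj : ∑ x ∈ S n, (starRingEnd ℂ) (g x) = (2:ℂ) ^ n * (starRingEnd ℂ) p := by
    rw [← map_sum, hsum]
    have : (starRingEnd ℂ) 2 = 2 := by
      simp [Complex.ext_iff]
    simp only [map_mul, map_pow, this]
  have hc : ∑ x ∈ S n, (g x - p) * (starRingEnd ℂ) (g x - p)
      = (∑ x ∈ S n, g x * (starRingEnd ℂ) (g x)) - 2 ^ n * (p * (starRingEnd ℂ) p) := by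
    have expand : ∀ x ∈ S n, (g x - p) * (starRingEnd ℂ) (g x - p)
        = g x * (starRingEnd ℂ) (g x) - g x * (starRingEnd ℂ) p
          - (p * (starRingEnd ℂ) (g x) - p * (starRingEnd ℂ) p) := by
      intro x _
      rw [map_sub]; ring
    rw [Finset.sum_congr rfl expand, Finset.sum_sub_distrib, Finset.sum_sub_distrib,
      Finset.sum_sub_distrib, ← Finset.sum_mul, ← Finset.mul_sum, hsum, hconj,
      Finset.sum_const, card_S]

    ring
  have h2 : ∀ z : ℂ, (z * (starRingEnd ℂ) z).re = ‖z‖ ^ 2 := by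
    intro z
    rw [Complex.mul_conj]
    simp [Complex.sq_norm]
  calc ∑ x ∈ S n, ‖g x - p‖ ^ 2
      = ∑ x ∈ S n, ((g x - p) * (starRingEnd ℂ) (g x - p)).re :=
        Finset.sum_congr rfl fun x _ => (h2 _).symm
    _ = (∑ x ∈ S n, (g x - p) * (starRingEnd ℂ) (g x - p)).re := (Complex.re_sum _ _).symm
    _ = ((∑ x ∈ S n, g x * (starRingEnd ℂ) (g x)) - 2 ^ n * (p * (starRingEnd ℂ) p)).re := by
        rw [hc]
    _ = (∑ x ∈ S n, ‖g x‖ ^ 2) - 2 ^ n * ‖p‖ ^ 2 := by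
        rw [Complex.sub_re, Complex.re_sum]
        congr 1
        · exact Finset.sum_congr rfl fun x _ => h2 _
        · rw [Complex.mul_conj]
          norm_cast
          simp [Complex.sq_norm]

end GlynnAux

theorem glynn_mean_squared_deviation_le (n : ℕ) (hn : 0 < n)
    (A : Matrix (Fin n) (Fin n) ℂ) :
    (2 : ℝ) ^ (-(n : ℤ)) *
        ∑ x ∈ Fintype.piFinset (fun _ : Fin n => ({-1, 1} : Finset ℂ)),
          ‖glynn A x - permanent A‖ ^ 2 ≤ ‖A‖ ^ (2 * n) := by
  classical
  have hvar := GlynnAux.variance_identity (n := n) A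
  have hbound : ∑ x ∈ GlynnAux.S n, ‖glynn A x‖ ^ 2
      ≤ (2 : ℝ) ^ n * ‖A‖ ^ (2 * n) := by
    have := Finset.sum_le_card_nsmul (GlynnAux.S n)
      (fun x => ‖glynn A x‖ ^ 2) (‖A‖ ^ (2 * n))
      (fun x hx => GlynnAux.pointwise_bound hn A x (GlynnAux.abs_one hx))
    rwa [GlynnAux.card_S, nsmul_eq_mul, Nat.cast_pow, Nat.cast_ofNat] at this
  have hle : ∑ x ∈ GlynnAux.S n, ‖glynn A x - permanent A‖ ^ 2
      ≤ (2 : ℝ) ^ n * ‖A‖ ^ (2 * n) := by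
    rw [hvar]
    have : (0:ℝ) ≤ 2 ^ n * ‖permanent A‖ ^ 2 := by positivity
    linarith [hbound]
  rw [zpow_neg, zpow_natCast]
  rw [inv_mul_le_iff₀ (by positivity)]
  exact hle
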